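/- arXiv:2402.17080 — 6 statements merged into one kernel-verified Lean document; each statement's English description precedes it below -/
import Mathlib

section
/- Let A > 0 and β = 4A/√3. Fix the edge {1,2} and set x_{12} = 3β, x_{ij} = β for all other edges {i,j} of the 4-simplex. Then this assignment solves the area-length system with all squared-area parameters equal to A²: for every triple i<j<k, 4x_{ij}x_{ik} − (x_{ij}+x_{ik}−x_{jk})² = 16A². -/
/-- Type II equi-area solution: `x₁₂ = 3β`, all other squared edge lengths `β`,
with `β = 4A/√3`, solves the area-length system with all squared areas `A²`. -/
theorem typeII_solution (A β : ℝ) (hA : 0 < A) (hβ : β = 4 * A / Real.sqrt 3)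
    (x : Fin 5 → Fin 5 → ℝ)
    (hsym : ∀ i j, x i j = x j i)
    (h12 : x 0 1 = 3 * β)
    (hrest : ∀ i j : Fin 5, i ≠ j → ({i, j} : Finset (Fin 5)) ≠ {0, 1} → x i j = β) :
    ∀ i j k : Fin 5, i < j → j < k →
      4 * x i j * x i k - (x i j + x i k - x j k)^2 = 16 * A^2 := by
  have hs3 : Real.sqrt 3 ^ 2 = 3 := Real.sq_sqrt (by norm_num)
  have hs3ne : Real.sqrt 3 ≠ 0 := by positivity
  have hβ2 : 3 * β ^ 2 = 16 * A ^ 2 := by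
    rw [hβ]; field_simp; nlinarith [hs3]
  have key : ∀ i j : Fin 5, i ≠ j → ¬(i = 0 ∧ j = 1) → ¬(i = 1 ∧ j = 0) → x i j = β := by
    intro i j hne h1 h2
    apply hrest i j hne
    intro hset
    fin_cases i <;> fin_cases j <;> revert hset h1 h2 hne <;> decide
  intro i j k hij hjk
  have hik : i < k := lt_trans hij hjk
  by_cases h : i = 0 ∧ j = 1
  · obtain ⟨rfl, rfl⟩ := h
    have h1 : x 0 k = β := key 0 k (ne_of_lt hik) (by rintro ⟨-, rfl⟩; omega) (by rintro ⟨h, -⟩; omega)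
    have h2 : x 1 k = β := key 1 k (ne_of_lt hjk) (by rintro ⟨h, -⟩; omega) (by rintro ⟨-, rfl⟩; omega)
    rw [h12, h1, h2]; nlinarith [hβ2]
  · have h1 : x i j = β := key i j (ne_of_lt hij) h (by rintro ⟨rfl, rfl⟩; omega)
    have h2 : x i k = β := key i k (ne_of_lt hik)
      (by rintro ⟨rfl, rfl⟩; exact h ⟨rfl, by omega⟩) (by rintro ⟨rfl, rfl⟩; omega)
    have h3 : x j k = β := key j k (ne_of_lt hjk)
      (by rintro ⟨rfl, rfl⟩; omega) (by rintro ⟨rfl, rfl⟩; omega)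
    rw [h1, h2, h3]; nlinarith [hβ2]
end

section
/- Let A > 0 and β = 4A/√3. Set x_{12} = x_{45} = 3β and x_{ij} = β for all other edges. Then this assignment solves the area-length system of the 4-simplex with all squared-area parameters equal to A². -/
set_option maxHeartbeats 1000000


/-- Type III equi-area solution: `x₁₂ = x₄₅ = 3β` (two disjoint edges), all other
squared edge lengths `β`, with `β = 4A/√3`, solves the area-length system with all
squared areas `A²`. -/
theorem typeIII_solution (A β : ℝ) (hA : 0 < A) (hβ : β = 4 * A / Real.sqrt 3)
    (x : Fin 5 → Fin 5 → ℝ)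
    (hsym : ∀ i j, x i j = x j i)
    (h12 : x 0 1 = 3 * β) (h45 : x 3 4 = 3 * β)
    (hrest : ∀ i j : Fin 5, i ≠ j → ({i, j} : Finset (Fin 5)) ≠ {0, 1} →
      ({i, j} : Finset (Fin 5)) ≠ {3, 4} → x i j = β) :
    ∀ i j k : Fin 5, i < j → j < k →
      4 * x i j * x i k - (x i j + x i k - x j k)^2 = 16 * A^2 := by
  have hs3 : (Real.sqrt 3) ^ 2 = 3 := Real.sq_sqrt (by norm_num)
  have hs3ne : Real.sqrt 3 ≠ 0 := by positivity
  have hb2 : 3 * β ^ 2 = 16 * A ^ 2 := by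
    rw [hβ]; field_simp; nlinarith [hs3]
  have h02 : x 0 2 = β := hrest 0 2 (by decide) (by decide) (by decide)
  have h03 : x 0 3 = β := hrest 0 3 (by decide) (by decide) (by decide)
  have h04 : x 0 4 = β := hrest 0 4 (by decide) (by decide) (by decide)
  have h12' : x 1 2 = β := hrest 1 2 (by decide) (by decide) (by decide)
  have h13 : x 1 3 = β := hrest 1 3 (by decide) (by decide) (by decide)
  have h14 : x 1 4 = β := hrest 1 4 (by decide) (by decide) (by decide)
  have h23 : x 2 3 = β := hrest 2 3 (by decide) (by decide) (by decide)
  have h24 : x 2 4 = β := hrest 2 4 (by decide) (by decide) (by decide)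
  have e0 : ∀ (h : 0 < 5), (⟨0,h⟩ : Fin 5) = 0 := fun _ => rfl
  have e1 : ∀ (h : 1 < 5), (⟨1,h⟩ : Fin 5) = 1 := fun _ => rfl
  have e2 : ∀ (h : 2 < 5), (⟨2,h⟩ : Fin 5) = 2 := fun _ => rfl
  have e3 : ∀ (h : 3 < 5), (⟨3,h⟩ : Fin 5) = 3 := fun _ => rfl
  have e4 : ∀ (h : 4 < 5), (⟨4,h⟩ : Fin 5) = 4 := fun _ => rfl
  rintro ⟨iv, hi⟩ ⟨jv, hj⟩ ⟨kv, hk⟩ hij hjk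
  simp only [Fin.mk_lt_mk] at hij hjk
  interval_cases iv <;> interval_cases jv <;> interval_cases kv <;>
    simp only [e0, e1, e2, e3, e4, h12, h45, h02, h03, h04, h12', h13, h14, h23, h24] <;>
    nlinarith [hb2]
end

section
/- Let A ∈ ℝ, A ≠ 0, and let γ = (4A/√5)·i ∈ ℂ. Assign squared edge lengths on the 5-cycle: x_{12} = x_{23} = x_{34} = x_{45} = x_{15} = γ and on the complementary 5-cycle (the pentagram): x_{13} = x_{35} = x_{25} = x_{24} = x_{14} = −γ. Then this assignment solves the complex area-length system of the 4-simplex with all squared-area parameters equal to A², and it is non-real. -/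
/-- Type IV equi-area solution: squared edge lengths `γ = (4A/√5)·i` on a 5-cycle
and `−γ` on the complementary 5-cycle solve the complex area-length system with all
squared areas `A²`, and this solution is non-real. -/
theorem typeIV_solution (A : ℝ) (hA : A ≠ 0) (γ : ℂ)
    (hγ : γ = (4 * A / Real.sqrt 5 : ℝ) * Complex.I)
    (x : Fin 5 → Fin 5 → ℂ)
    (hsym : ∀ i j, x i j = x j i)
    (hc1 : x 0 1 = γ) (hc2 : x 1 2 = γ) (hc3 : x 2 3 = γ) (hc4 : x 3 4 = γ)
    (hc5 : x 0 4 = γ)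
    (hp1 : x 0 2 = -γ) (hp2 : x 2 4 = -γ) (hp3 : x 1 4 = -γ) (hp4 : x 1 3 = -γ)
    (hp5 : x 0 3 = -γ) :
    (∀ i j k : Fin 5, i < j → j < k →
      4 * x i j * x i k - (x i j + x i k - x j k)^2 = 16 * (A : ℂ)^2) ∧
    (∃ i j : Fin 5, (x i j).im ≠ 0) := by
  have h5 : Real.sqrt 5 ≠ 0 := by positivity
  have hsq : (Real.sqrt 5 : ℝ) ^ 2 = 5 := Real.sq_sqrt (by norm_num)
  have hγ2 : γ ^ 2 = -(16 * (A : ℂ) ^ 2) / 5 := by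
    rw [hγ]
    have : ((4 * A / Real.sqrt 5 : ℝ) : ℂ) ^ 2 = 16 * (A : ℂ) ^ 2 / 5 := by
      push_cast
      rw [div_pow]
      norm_cast
      rw [hsq]
      push_cast; ring
    rw [mul_pow, this, Complex.I_sq]
    ring
  constructor
  · intro i j k hij hjk
    fin_cases i <;> fin_cases j <;> fin_cases k <;>
      first
        | exact absurd hij (by decide)
        | exact absurd hjk (by decide)
        | (simp only [show (⟨0, by omega⟩ : Fin 5) = 0 from rfl,
              show (⟨1, by omega⟩ : Fin 5) = 1 from rfl,
              show (⟨2, by omega⟩ : Fin 5) = 2 from rfl,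
              show (⟨3, by omega⟩ : Fin 5) = 3 from rfl,
              show (⟨4, by omega⟩ : Fin 5) = 4 from rfl,
              hc1, hc2, hc3, hc4, hc5, hp1, hp2, hp3, hp4, hp5]
           linear_combination (-5 : ℂ) * hγ2)
  · refine ⟨0, 1, ?_⟩
    rw [hc1, hγ]
    simp only [Complex.mul_im, Complex.ofReal_re, Complex.I_im, Complex.ofReal_im,
      Complex.I_re, mul_one, mul_zero, add_zero]
    exact div_ne_zero (by positivity) h5
end

section
/- There exists a choice of ten positive real squared-area parameters for which the area-length system of a 4-simplex has a solution in squared edge lengths that does NOT arise from any single global scaling of another solution; more precisely, with all areas equal to A > 0, both the equilateral solution (all x_{ij} = β) and the solution with x_{12} = 3β and other x_{ij} = β are positive real solutions, and they are distinct. Hence the map from (squared) edge lengths to (squared) areas of a 4-simplex is not injective even on positive real tuples. -/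
/-- The map from squared edge lengths to squared areas of a 4-simplex is not
injective on positive real tuples: with all squared areas equal to `A² > 0`, both
the equilateral tuple (all `x_{ij} = β`) and the tuple with `x₁₂ = 3β`, other
entries `β`, are positive real solutions of the area-length system, and they are
distinct. -/
theorem areas_not_injective :
    ∃ (A β : ℝ) (x₁ x₂ : Fin 5 → Fin 5 → ℝ),
      0 < A ∧ β = 4 * A / Real.sqrt 3 ∧
      (∀ i j, x₁ i j = β) ∧
      (∀ i j, x₂ i j = if ({i, j} : Finset (Fin 5)) = {0, 1} then 3 * β else β) ∧
      (∀ i j : Fin 5, i ≠ j → 0 < x₁ i j) ∧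
      (∀ i j : Fin 5, i ≠ j → 0 < x₂ i j) ∧
      (∀ i j k : Fin 5, i < j → j < k →
        4 * x₁ i j * x₁ i k - (x₁ i j + x₁ i k - x₁ j k)^2 = 16 * A^2) ∧
      (∀ i j k : Fin 5, i < j → j < k →
        4 * x₂ i j * x₂ i k - (x₂ i j + x₂ i k - x₂ j k)^2 = 16 * A^2) ∧
      x₁ ≠ x₂ := by
  have h3 : (0:ℝ) < Real.sqrt 3 := Real.sqrt_pos.mpr (by norm_num)
  set β : ℝ := 4 * 1 / Real.sqrt 3 with hβ
  have hβpos : 0 < β := by positivity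
  have hβsq : 3 * β ^ 2 = 16 := by
    rw [hβ, div_pow, Real.sq_sqrt (by norm_num : (0:ℝ) ≤ 3)]
    ring
  refine ⟨1, β, (fun _ _ => β),
    (fun i j => if ({i, j} : Finset (Fin 5)) = {0, 1} then 3 * β else β),
    one_pos, rfl, fun _ _ => rfl, fun _ _ => rfl,
    fun _ _ _ => hβpos, fun i j _ => ?_, fun i j k _ _ => by nlinarith, ?_, ?_⟩
  · dsimp only; split <;> [linarith; exact hβpos]
  · intro i j k hij hjk
    fin_cases i <;> fin_cases j <;> fin_cases k <;>
      simp_all (config := { decide := true }) <;> nlinarith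
  · intro h
    have := congrFun (congrFun h 0) 1
    simp only [if_true] at this
    linarith
end

section
/- For real numbers a, b, c: if 4ab − (a+b−c)² > 0, then a, b, c are all strictly positive or all strictly negative. -/
/-- Single-triangle positivity: if `4ab − (a+b−c)² > 0` for reals `a,b,c`, then
`a,b,c` are all strictly positive or all strictly negative. -/
theorem heron_pos_signs (a b c : ℝ) (h : 0 < 4*a*b - (a + b - c)^2) :
    (0 < a ∧ 0 < b ∧ 0 < c) ∨ (a < 0 ∧ b < 0 ∧ c < 0) := by
  have hab : 0 < a * b := by nlinarith [sq_nonneg (a + b - c)]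
  rcases mul_pos_iff.mp hab with ⟨ha, hb⟩ | ⟨ha, hb⟩
  · left
    refine ⟨ha, hb, ?_⟩
    by_contra hc
    push_neg at hc
    nlinarith [sq_nonneg (a - b)]
  · right
    refine ⟨ha, hb, ?_⟩
    by_contra hc
    push_neg at hc
    nlinarith [sq_nonneg (a - b)]
end

section
/- Let β > 0 and consider the squared edge lengths with x_{12} = 3β and x_{ij} = β otherwise (type II equi-area solution). Then the Gram matrix M with m_{ij} = ½(x_{i5}+x_{j5}−x_{ij}) has signature (−,+,+,+) (exactly one negative eigenvalue and three positive); hence this solution satisfies the Lorentzian (Minkowski ℝ^{1,3}) 4-simplex realizability condition but not the Euclidean one. -/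
set_option maxHeartbeats 1000000 in
/-- The Gram matrix of the type II equi-area solution (`x₁₂ = 3β`, other squared
edge lengths `β`, with `β > 0`) has signature `(−,+,+,+)`: exactly one negative and
three positive eigenvalues; in particular it is not positive definite, so the
solution is Lorentzian but not Euclidean. -/
theorem typeII_gram_lorentzian (β : ℝ) (hβ : 0 < β)
    (M : Matrix (Fin 4) (Fin 4) ℝ)
    (hM : ∀ i j : Fin 4, M i j =
      if i = j then β
      else if ({i, j} : Finset (Fin 4)) = {0, 1} then -β / 2 else β / 2) :
    ∃ hHerm : M.IsHermitian,
      (Finset.univ.filter (fun i => hHerm.eigenvalues i < 0)).card = 1 ∧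
      (Finset.univ.filter (fun i => 0 < hHerm.eigenvalues i)).card = 3 ∧
      ¬ M.PosDef := by
  classical
  have hpair : ∀ i j : Fin 4, (({i,j} : Finset (Fin 4)) = {0,1}) ↔ (i=0∧j=1 ∨ i=1∧j=0) := by
    decide
  have hHerm : M.IsHermitian := by
    ext i j
    fin_cases i <;> fin_cases j <;> simp [Matrix.conjTranspose_apply, hM, hpair]
  set ε : Fin 4 → ℝ := hHerm.eigenvalues with hε
  clear_value ε
  -- the resolvent matrix in explicit form
  have hlit : ∀ μ : ℝ, μ • (1 : Matrix (Fin 4) (Fin 4) ℝ) - M =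
      !![μ-β, β/2, -(β/2), -(β/2); β/2, μ-β, -(β/2), -(β/2);
         -(β/2), -(β/2), μ-β, -(β/2); -(β/2), -(β/2), -(β/2), μ-β] := by
    intro μ
    ext i j
    fin_cases i <;> fin_cases j <;>
      simp [hM, Matrix.one_apply, hpair, Matrix.vecHead, Matrix.vecTail] <;> ring
  have hdet : ∀ μ : ℝ, (μ • (1 : Matrix (Fin 4) (Fin 4) ℝ) - M).det =
      (μ - 3*β/2)*(μ - β/2)*(μ^2 - 2*β*μ - β^2/4) := by
    intro μ
    rw [hlit μ]
    simp [Matrix.det_succ_row_zero, Fin.sum_univ_succ, Fin.succAbove,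
      Fin.castSucc, Fin.castAdd, Fin.castLE]
    ring
  set s := Real.sqrt 5 with hsdef
  have hs : s^2 = 5 := Real.sq_sqrt (by norm_num)
  have hs0 : 0 ≤ s := Real.sqrt_nonneg 5
  have hs2 : 2 < s := by nlinarith
  have hs94 : s < 9/4 := by nlinarith
  -- each eigenvalue is a root of the characteristic polynomial
  have hroot : ∀ i, (ε i - 3*β/2)*(ε i - β/2)*((ε i)^2 - 2*β*(ε i) - β^2/4) = 0 := by
    intro i
    have h := hHerm.eigenvalues_mem_spectrum_real i
    rw [← hε, spectrum.mem_iff, Algebra.algebraMap_eq_smul_one] at h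
    rw [← hdet (ε i)]
    by_contra hne
    exact h ((Matrix.isUnit_iff_isUnit_det _).2 (isUnit_iff_ne_zero.2 hne))
  have hvals : ∀ i, ε i = β/2 ∨ ε i = 3*β/2 ∨ ε i = (2+s)*β/2 ∨ ε i = (2-s)*β/2 := by
    intro i
    have h := hroot i
    rcases mul_eq_zero.1 h with h' | hq
    · rcases mul_eq_zero.1 h' with h1 | h1
      · right; left; linarith
      · left; linarith
    · have hfac : (ε i - (2+s)*β/2)*(ε i - (2-s)*β/2) = 0 := by
        linear_combination hq - β^2/4 * hs
      rcases mul_eq_zero.1 hfac with h1 | h1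
      · right; right; left; linarith
      · right; right; right; linarith
  -- trace
  have htr : ε 0 + ε 1 + ε 2 + ε 3 = 4*β := by
    have h1 : M.trace = ∑ i, ε i := by
      nth_rewrite 1 [hHerm.spectral_theorem]
      rw [Unitary.conjStarAlgAut_apply]
      rw [Matrix.trace_mul_comm, ← Matrix.mul_assoc,
        Matrix.mem_unitaryGroup_iff'.mp (hHerm.eigenvectorUnitary).2, Matrix.one_mul,
        Matrix.trace_diagonal]
      simp [hε]
    have h2 : M.trace = 4*β := by
      simp [Matrix.trace, Matrix.diag, Fin.sum_univ_four, hM]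
    rw [h1, Fin.sum_univ_four] at h2
    linarith
  -- determinant
  have hdM : M.det = -(3/16)*β^4 := by
    have h0 : ((0:ℝ) • (1 : Matrix (Fin 4) (Fin 4) ℝ) - M).det = M.det := by
      rw [zero_smul, zero_sub, Matrix.det_neg]
      norm_num
    rw [← h0, hdet 0]
    ring
  have hprod : ε 0 * ε 1 * ε 2 * ε 3 = -(3/16)*β^4 := by
    have h2 := hHerm.det_eq_prod_eigenvalues
    rw [← hε] at h2
    rw [Fin.prod_univ_four, hdM] at h2
    exact_mod_cast h2.symm
  -- sign information for every eigenvalue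
  have hsign : ∀ i : Fin 4, (ε i < 0 ∧ -β/8 < ε i) ∨ (0 < ε i ∧ ε i < 17*β/8) := by
    intro i
    rcases hvals i with h | h | h | h
    · right; constructor <;> (rw [h]; linarith)
    · right; constructor <;> (rw [h]; linarith)
    · right
      constructor
      · rw [h]; nlinarith [mul_pos (show (0:ℝ) < 2+s by linarith) hβ]
      · rw [h]; nlinarith [mul_pos (show (0:ℝ) < 9/4-s by linarith) hβ]
    · left
      constructor
      · rw [h]; nlinarith [mul_pos (show (0:ℝ) < s-2 by linarith) hβ]
      · rw [h]; nlinarith [mul_pos (show (0:ℝ) < 9/4-s by linarith) hβ]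
  obtain ⟨c1, c3⟩ :
      (Finset.univ.filter (fun i => ε i < 0)).card = 1 ∧
      (Finset.univ.filter (fun i => 0 < ε i)).card = 3 := by
    rcases hsign 0 with e0 | e0 <;> rcases hsign 1 with e1 | e1 <;>
      rcases hsign 2 with e2 | e2 <;> rcases hsign 3 with e3 | e3
    · exfalso
      linarith [e0.1, e1.1, e2.1, e3.1, htr]
    · exfalso
      linarith [e0.1, e1.1, e2.1, e3.2, htr]
    · exfalso
      linarith [e0.1, e1.1, e3.1, e2.2, htr]
    · exfalso
      nlinarith [pow_pos hβ 4, hprod,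
        mul_pos (mul_pos_of_neg_of_neg e0.1 e1.1) (mul_pos e2.1 e3.1)]
    · exfalso
      linarith [e0.1, e2.1, e3.1, e1.2, htr]
    · exfalso
      nlinarith [pow_pos hβ 4, hprod,
        mul_pos (mul_pos_of_neg_of_neg e0.1 e2.1) (mul_pos e1.1 e3.1)]
    · exfalso
      nlinarith [pow_pos hβ 4, hprod,
        mul_pos (mul_pos_of_neg_of_neg e0.1 e3.1) (mul_pos e1.1 e2.1)]
    · constructor
      · rw [Finset.card_filter, Fin.sum_univ_four, if_pos e0.1, if_neg (not_lt.2 e1.1.le), if_neg (not_lt.2 e2.1.le), if_neg (not_lt.2 e3.1.le)]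
      · rw [Finset.card_filter, Fin.sum_univ_four, if_neg (not_lt.2 e0.1.le), if_pos e1.1, if_pos e2.1, if_pos e3.1]
    · exfalso
      linarith [e1.1, e2.1, e3.1, e0.2, htr]
    · exfalso
      nlinarith [pow_pos hβ 4, hprod,
        mul_pos (mul_pos_of_neg_of_neg e1.1 e2.1) (mul_pos e0.1 e3.1)]
    · exfalso
      nlinarith [pow_pos hβ 4, hprod,
        mul_pos (mul_pos_of_neg_of_neg e1.1 e3.1) (mul_pos e0.1 e2.1)]
    · constructor
      · rw [Finset.card_filter, Fin.sum_univ_four, if_neg (not_lt.2 e0.1.le), if_pos e1.1, if_neg (not_lt.2 e2.1.le), if_neg (not_lt.2 e3.1.le)]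
      · rw [Finset.card_filter, Fin.sum_univ_four, if_pos e0.1, if_neg (not_lt.2 e1.1.le), if_pos e2.1, if_pos e3.1]
    · exfalso
      nlinarith [pow_pos hβ 4, hprod,
        mul_pos (mul_pos_of_neg_of_neg e2.1 e3.1) (mul_pos e0.1 e1.1)]
    · constructor
      · rw [Finset.card_filter, Fin.sum_univ_four, if_neg (not_lt.2 e0.1.le), if_neg (not_lt.2 e1.1.le), if_pos e2.1, if_neg (not_lt.2 e3.1.le)]
      · rw [Finset.card_filter, Fin.sum_univ_four, if_pos e0.1, if_pos e1.1, if_neg (not_lt.2 e2.1.le), if_pos e3.1]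
    · constructor
      · rw [Finset.card_filter, Fin.sum_univ_four, if_neg (not_lt.2 e0.1.le), if_neg (not_lt.2 e1.1.le), if_neg (not_lt.2 e2.1.le), if_pos e3.1]
      · rw [Finset.card_filter, Fin.sum_univ_four, if_pos e0.1, if_pos e1.1, if_pos e2.1, if_neg (not_lt.2 e3.1.le)]
    · exfalso
      nlinarith [pow_pos hβ 4, hprod,
        mul_pos (mul_pos (mul_pos e0.1 e1.1) e2.1) e3.1]
  refine ⟨hHerm, ?_, ?_, fun hpd => ?_⟩
  · rw [← hε]; exact c1
  · rw [← hε]; exact c3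
  · have := hpd.det_pos
    rw [hdM] at this
    nlinarith [pow_pos hβ 4]
end
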